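/- There exists a degeneration R_5(α_4,...,α_n) → R_5(0,...,0): with g_t(x) = x, g_t(e_1) = t·e_1, g_t(e_i) = t^{i-1}e_i (2 ≤ i ≤ n), the transported brackets converge as t → 0 to the bracket of R_5(0). -/

import Mathlib

/-- Coordinate of `u` at a natural-number index, zero out of range. -/
def cf {m : ℕ} (u : Fin m → ℂ) (j : ℕ) : ℂ := if h : j < m then u ⟨j, h⟩ else 0

/-- The bracket of `R_5(α_4, …, α_n)` (parameters given as `a : ℕ → ℂ`, with `a i = α_i`)
on the basis `e_1, …, e_n, x` (0-based coordinate `k` corresponds to `e_{k+1}` for `k < n`,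
and to `x` for `k = n`):
`[e_1,e_1] = e_3`, `[e_i,e_1] = e_{i+1}` (`2 ≤ i ≤ n-1`),
`[e_1,x] = e_2 + Σ_{i=4}^{n-1} α_i e_i`,
`[e_i,x] = e_i + Σ_{j=i+2}^{n} α_{j-i+2} e_j` (`2 ≤ i ≤ n`), other products zero. -/
noncomputable def r5br (n : ℕ) (a : ℕ → ℂ) (u v : Fin (n + 1) → ℂ) : Fin (n + 1) → ℂ := fun k =>
  let m := (k : ℕ) + 1
  (if 3 ≤ m ∧ m ≤ n then (cf u (m - 2) + if m = 3 then cf u 0 else 0) * cf v 0 else 0)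
  + (if 2 ≤ m ∧ m ≤ n then
      (cf u (m - 1) + (if m = 2 then cf u 0 else 0)
        + (if 4 ≤ m ∧ m ≤ n - 1 then a m * cf u 0 else 0)
        + ∑ i ∈ Finset.Icc 2 (m - 2), a (m - i + 2) * cf u (i - 1)) * cf v n
    else 0)

/-- The diagonal coefficients of `g_t`: `g_t(x) = x`, `g_t(e_1) = t e_1`,
`g_t(e_i) = t^{i-1} e_i` for `2 ≤ i ≤ n` (0-based index `j` corresponds to `e_{j+1}`). -/
def d17 (n : ℕ) (t : ℂ) (j : ℕ) : ℂ :=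
  if j = n then 1 else if j = 0 then t else t ^ j

lemma cf_smul {m : ℕ} (c : ℕ → ℂ) (u : Fin m → ℂ) (j : ℕ) :
    cf (fun k' => c (k' : ℕ) * u k') j = c j * cf u j := by
  unfold cf; split <;> simp

noncomputable def Faux (n : ℕ) (a : ℕ → ℂ) (u v : Fin (n + 1) → ℂ) (t : ℂ) (k : Fin (n + 1)) : ℂ :=
  r5br n (fun _ => 0) u v k +
  (if 2 ≤ (k : ℕ) + 1 ∧ (k : ℕ) + 1 ≤ n then
    ((if 4 ≤ (k : ℕ) + 1 ∧ (k : ℕ) + 1 ≤ n - 1 then a ((k : ℕ) + 1) * cf u 0 * t ^ ((k : ℕ) - 1) else 0)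
      + ∑ i ∈ Finset.Icc 2 ((k : ℕ) - 1), a ((k : ℕ) + 1 - i + 2) * cf u (i - 1) * t ^ ((k : ℕ) + 1 - i)) * cf v n
  else 0)

lemma main_eq (n : ℕ) (a : ℕ → ℂ) (u v : Fin (n + 1) → ℂ) (k : Fin (n + 1)) (t : ℂ) (ht : t ≠ 0) :
    d17 n t (k : ℕ) *
      r5br n a (fun k' => (d17 n t (k' : ℕ))⁻¹ * u k')
        (fun k' => (d17 n t (k' : ℕ))⁻¹ * v k') k = Faux n a u v t k := by
  have hk : (k : ℕ) ≤ n := by omega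
  simp only [r5br, Faux, cf_smul (fun j => (d17 n t j)⁻¹) u, cf_smul (fun j => (d17 n t j)⁻¹) v]
  by_cases h2 : 2 ≤ (k : ℕ) + 1 ∧ (k : ℕ) + 1 ≤ n
  · by_cases h3 : 3 ≤ (k : ℕ) + 1 ∧ (k : ℕ) + 1 ≤ n
    · obtain ⟨p, hK⟩ : ∃ p, (k : ℕ) = p + 2 := ⟨(k : ℕ) - 2, by omega⟩
      have hn : p + 3 ≤ n := by omega
      have e1 : (k : ℕ) + 1 - 2 = p + 1 := by omega
      have e2 : (k : ℕ) + 1 - 1 = p + 2 := by omega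
      have e3 : (k : ℕ) - 1 = p + 1 := by omega
      have hd0 : d17 n t 0 = t := by
        simp only [d17]; rw [if_neg (by omega)]; simp
      have hdn : d17 n t n = 1 := by simp [d17]
      have hdA : d17 n t (p + 1) = t ^ (p + 1) := by
        simp only [d17]; rw [if_neg (by omega), if_neg (by omega)]
      have hdB : d17 n t (p + 2) = t ^ (p + 2) := by
        simp only [d17]; rw [if_neg (by omega), if_neg (by omega)]
      have hsum : (∑ i ∈ Finset.Icc 2 ((k : ℕ) + 1 - 2),
            a ((k : ℕ) + 1 - i + 2) * ((d17 n t (i - 1))⁻¹ * cf u (i - 1))) =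
          (t ^ (p + 2))⁻¹ * ∑ i ∈ Finset.Icc 2 ((k : ℕ) - 1),
            a ((k : ℕ) + 1 - i + 2) * cf u (i - 1) * t ^ ((k : ℕ) + 1 - i) := by
        rw [e1, e3, Finset.mul_sum]
        refine Finset.sum_congr rfl fun i hi => ?_
        rw [Finset.mem_Icc] at hi
        have hdi : d17 n t (i - 1) = t ^ (i - 1) := by
          simp only [d17]; rw [if_neg (by omega), if_neg (by omega)]
        have hpow : t ^ ((k : ℕ) + 1 - i) = t ^ (p + 2) * (t ^ (i - 1))⁻¹ := by
          rw [← pow_sub₀ t ht (by omega)]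
          congr 1; omega
        rw [hdi, hpow]
        field_simp
      rw [hsum, if_pos h3, if_pos h2, if_pos h3, if_pos h2, if_pos h2,
        if_neg (show ¬ ((k : ℕ) + 1 = 2) by omega),
        if_neg (show ¬ ((k : ℕ) + 1 = 2) by omega),
        e1, e2, e3, hK, hd0, hdn, hdA, hdB]
      set S := ∑ i ∈ Finset.Icc 2 (p + 1), a (p + 2 + 1 - i + 2) * cf u (i - 1) * t ^ (p + 2 + 1 - i) with hS
      have hz : (∑ i ∈ Finset.Icc 2 (p + 1), (0 : ℂ) * cf u (i - 1)) = 0 := by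
        simp
      by_cases hm3 : p + 2 + 1 = 3
      · rw [if_pos hm3, if_pos hm3]
        have hp0 : p = 0 := by omega
        subst hp0
        rw [if_neg (by omega), if_neg (by omega), if_neg (by omega)]
        rw [hz]
        field_simp
        ring
      · rw [if_neg hm3, if_neg hm3, hz]
        by_cases hC : 4 ≤ p + 2 + 1 ∧ p + 2 + 1 ≤ n - 1
        · rw [if_pos hC, if_pos hC, if_pos hC]
          rw [show ((0:ℂ) * cf u 0) = 0 by ring]
          have hc1 : t ^ (p + 2) * ((t ^ (p + 1))⁻¹ * t⁻¹) = 1 := by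
            field_simp; ring
          have hc2 : t ^ (p + 2) * (t ^ (p + 2))⁻¹ = 1 := by field_simp
          have hc3 : t ^ (p + 2) * t⁻¹ = t ^ (p + 1) := by
            field_simp; ring
          linear_combination (cf u (p + 1) * cf v 0) * hc1 +
            ((cf u (p + 2) + S) * cf v n) * hc2 +
            (a (p + 2 + 1) * cf u 0 * cf v n) * hc3
        · rw [if_neg hC, if_neg hC, if_neg hC]
          field_simp
          ring
    · -- K = 1
      have hK : (k : ℕ) = 1 := by omega
      have hn2 : 2 ≤ n := by omega
      have hd1 : d17 n t 1 = t := by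
        simp only [d17]; rw [if_neg (by omega), if_neg (by omega)]; ring
      have hdn : d17 n t n = 1 := by simp [d17]
      have hd0 : d17 n t 0 = t := by
        simp only [d17]; rw [if_neg (by omega)]; simp
      rw [if_neg h3, if_neg h3, if_pos h2, if_pos h2, if_pos h2, hK,
        if_pos (by norm_num : (1:ℕ) + 1 = 2), if_pos (by norm_num : (1:ℕ) + 1 = 2),
        if_neg (by omega), if_neg (by omega), if_neg (by omega)]
      simp only [show (1:ℕ) + 1 - 1 = 1 from rfl, show (1:ℕ) + 1 - 2 = 0 from rfl,
        show (1:ℕ) - 1 = 0 from rfl]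
      rw [Finset.Icc_eq_empty (by omega), Finset.sum_empty, hd1, hdn, hd0]
      field_simp
      simp only [Finset.sum_empty]
      ring
  · have h3 : ¬ (3 ≤ (k : ℕ) + 1 ∧ (k : ℕ) + 1 ≤ n) := by omega
    rw [if_neg h2, if_neg h3, if_neg h2, if_neg h3, if_neg h2]
    ring

lemma Faux_zero (n : ℕ) (a : ℕ → ℂ) (u v : Fin (n + 1) → ℂ) (k : Fin (n + 1)) :
    Faux n a u v 0 k = r5br n (fun _ => 0) u v k := by
  unfold Faux
  by_cases h2 : 2 ≤ (k : ℕ) + 1 ∧ (k : ℕ) + 1 ≤ n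
  · rw [if_pos h2]
    have hA : (if 4 ≤ (k : ℕ) + 1 ∧ (k : ℕ) + 1 ≤ n - 1 then
        a ((k : ℕ) + 1) * cf u 0 * (0 : ℂ) ^ ((k : ℕ) - 1) else 0) = 0 := by
      split
      · rw [zero_pow (by omega), mul_zero]
      · rfl
    have hB : (∑ i ∈ Finset.Icc 2 ((k : ℕ) - 1),
        a ((k : ℕ) + 1 - i + 2) * cf u (i - 1) * (0 : ℂ) ^ ((k : ℕ) + 1 - i)) = 0 := by
      refine Finset.sum_eq_zero fun i hi => ?_
      rw [Finset.mem_Icc] at hi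
      rw [zero_pow (by omega), mul_zero]
    rw [hA, hB]; ring
  · rw [if_neg h2]; ring

lemma Faux_cont (n : ℕ) (a : ℕ → ℂ) (u v : Fin (n + 1) → ℂ) (k : Fin (n + 1)) :
    Continuous (fun t => Faux n a u v t k) := by
  unfold Faux
  apply continuous_const.add
  split
  · apply Continuous.mul _ continuous_const
    apply Continuous.add
    · split
      · exact continuous_const.mul (continuous_pow _)
      · exact continuous_const
    · exact continuous_finset_sum _ fun i _ => continuous_const.mul (continuous_pow _)
  · exact continuous_const

/-- Degeneration `R_5(α_4, …, α_n) → R_5(0, …, 0)`: the transported brackets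
`[u,v]_t = g_t [g_t⁻¹ u, g_t⁻¹ v]` converge, as `t → 0` (`t ≠ 0`), to the bracket of
`R_5(0)`. -/
theorem r5_degenerates_to_r5_zero (n : ℕ) (a : ℕ → ℂ) (u v : Fin (n + 1) → ℂ) :
    Filter.Tendsto
      (fun t : ℂ => fun k : Fin (n + 1) =>
        d17 n t (k : ℕ) *
          r5br n a (fun k' => (d17 n t (k' : ℕ))⁻¹ * u k')
            (fun k' => (d17 n t (k' : ℕ))⁻¹ * v k') k)
      (nhdsWithin 0 {t : ℂ | t ≠ 0}) (nhds (r5br n (fun _ => 0) u v)) := by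
  rw [tendsto_pi_nhds]
  intro k
  have h1 : Filter.Tendsto (fun t => Faux n a u v t k)
      (nhdsWithin 0 {t : ℂ | t ≠ 0}) (nhds (r5br n (fun _ => 0) u v k)) := by
    have := ((Faux_cont n a u v k).tendsto 0).mono_left
      (nhdsWithin_le_nhds (s := {t : ℂ | t ≠ 0}))
    rwa [Faux_zero] at this
  refine h1.congr' ?_
  filter_upwards [self_mem_nhdsWithin] with t ht
  exact (main_eq n a u v k t ht).symm
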